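/- Let d ≥ 1, f : ℝ^d → ℝ, x₀ ∈ ℝ^d, r > 0, and M > 1. Suppose P : ℝ^d → ℝ is an affine function with |∇P| > 1 such that |f(x) − P(x)| ≤ M·r for all x in the open ball B(x₀, 2r) ⊆ ℝ^d. Set r' = min(r/2, M·r/|∇P|), u = ∇P/|∇P|, and x₀' = x₀ + 2r'·u. Then for all x in the open ball B(x₀', r'), we have |f(x) − f(x₀')| ≤ 3M·r. -/

import Mathlib

open Metric

/-- If `f : ℝ^d → ℝ` is approximated within `M·r` on `B(x₀, 2r)` by an affine
function `P(x) = ⟨a, x⟩ + b` with gradient `|a| > 1`, then with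
`r' = min(r/2, M·r/|a|)`, `u = a/|a|`, and `x₀' = x₀ + 2r'·u`, one has
`|f x - f x₀'| ≤ 3M·r` for all `x ∈ B(x₀', r')`. -/
theorem affine_approx_large_gradient_oscillation
    (d : ℕ) (hd : 1 ≤ d)
    (f : EuclideanSpace ℝ (Fin d) → ℝ)
    (x₀ : EuclideanSpace ℝ (Fin d)) (r : ℝ) (hr : 0 < r)
    (M : ℝ) (hM : 1 < M)
    (a : EuclideanSpace ℝ (Fin d)) (b : ℝ)
    (ha : 1 < ‖a‖)
    (hApprox : ∀ x ∈ ball x₀ (2 * r), |f x - ((inner ℝ a x : ℝ) + b)| ≤ M * r) :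
    ∀ x ∈ ball (x₀ + (2 * min (r / 2) (M * r / ‖a‖)) • (‖a‖⁻¹ • a))
        (min (r / 2) (M * r / ‖a‖)),
      |f x - f (x₀ + (2 * min (r / 2) (M * r / ‖a‖)) • (‖a‖⁻¹ • a))| ≤ 3 * M * r := by
  set r' : ℝ := min (r / 2) (M * r / ‖a‖) with hr'def
  set u : EuclideanSpace ℝ (Fin d) := ‖a‖⁻¹ • a with hudef
  set x₀' : EuclideanSpace ℝ (Fin d) := x₀ + (2 * r') • u with hx₀'def
  have ha0 : (0:ℝ) < ‖a‖ := lt_trans one_pos ha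
  have hMpos : (0:ℝ) < M := lt_trans one_pos hM
  have hr'pos : 0 < r' := lt_min (by linarith) (div_pos (mul_pos hMpos hr) ha0)
  have hr'le1 : r' ≤ r / 2 := min_le_left _ _
  have hr'le2 : r' ≤ M * r / ‖a‖ := min_le_right _ _
  have hu : ‖u‖ = 1 := by
    rw [hudef, norm_smul, norm_inv, norm_norm, inv_mul_cancel₀ (ne_of_gt ha0)]
  have hdist : dist x₀' x₀ = 2 * r' := by
    rw [hx₀'def, dist_eq_norm, add_sub_cancel_left, norm_smul, hu, mul_one,
      Real.norm_eq_abs, abs_of_pos (by linarith)]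
  have hx₀'mem : x₀' ∈ ball x₀ (2 * r) := by
    rw [mem_ball, hdist]; linarith
  intro x hx
  rw [mem_ball] at hx
  have hxmem : x ∈ ball x₀ (2 * r) := by
    rw [mem_ball]
    calc dist x x₀ ≤ dist x x₀' + dist x₀' x₀ := dist_triangle _ _ _
      _ < r' + 2 * r' := by rw [hdist]; linarith
      _ ≤ 2 * r := by linarith
  have h1 := hApprox x hxmem
  have h2 := hApprox x₀' hx₀'mem
  have hmid : |(inner ℝ a x : ℝ) - inner ℝ a x₀'| ≤ M * r := by
    rw [← inner_sub_right]
    calc |(inner ℝ a (x - x₀') : ℝ)| ≤ ‖a‖ * ‖x - x₀'‖ := abs_real_inner_le_norm _ _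
      _ ≤ ‖a‖ * r' := by
          apply mul_le_mul_of_nonneg_left _ (le_of_lt ha0)
          rw [← dist_eq_norm]; exact le_of_lt hx
      _ ≤ ‖a‖ * (M * r / ‖a‖) := mul_le_mul_of_nonneg_left hr'le2 (le_of_lt ha0)
      _ = M * r := by field_simp
  calc |f x - f x₀'|
      = |(f x - ((inner ℝ a x : ℝ) + b)) + ((inner ℝ a x : ℝ) - inner ℝ a x₀')
          + (((inner ℝ a x₀' : ℝ) + b) - f x₀')| := by ring_nf
    _ ≤ |(f x - ((inner ℝ a x : ℝ) + b)) + ((inner ℝ a x : ℝ) - inner ℝ a x₀')|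
          + |((inner ℝ a x₀' : ℝ) + b) - f x₀'| := abs_add_le _ _
    _ ≤ |f x - ((inner ℝ a x : ℝ) + b)| + |(inner ℝ a x : ℝ) - inner ℝ a x₀'|
          + |((inner ℝ a x₀' : ℝ) + b) - f x₀'| := by
        have := abs_add_le (f x - ((inner ℝ a x : ℝ) + b)) ((inner ℝ a x : ℝ) - inner ℝ a x₀')
        linarith
    _ ≤ M * r + M * r + M * r := by
        rw [abs_sub_comm (((inner ℝ a x₀' : ℝ) + b)) (f x₀')]
        exact add_le_add (add_le_add h1 hmid) h2
    _ = 3 * M * r := by ring
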